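/- Let T : X → X be a continuous map of a compact metric space X. For every ε > 0 there exists d > 0 such that for every one-sided d-pseudotrajectory {x_k}_{k≥0} there exist a minimal point y ∈ X and an infinite set K ⊆ ℕ of positive upper density such that ρ(x_k, T^k(y)) < ε for all k ∈ K. -/

import Mathlib

open Metric Filter Set Topology
open scoped Classical

variable {X : Type*}

/-- A set of naturals is syndetic: bounded gaps. -/
def Syndetic (S : Set ℕ) : Prop := ∃ n : ℕ, ∀ m : ℕ, ∃ k ∈ S, m ≤ k ∧ k ≤ m + n

/-- Forward orbit of a point. -/
def fwdOrbit (T : X → X) (y : X) : Set X := Set.range fun k : ℕ => T^[k] y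

/-- A point is minimal (almost periodic): its forward orbit closure is a minimal set. -/
def IsMinimalPt [TopologicalSpace X] (T : X → X) (y : X) : Prop :=
  ∀ z ∈ closure (fwdOrbit T y), closure (fwdOrbit T z) = closure (fwdOrbit T y)

/-- ℤ-iteration of a homeomorphism. -/
noncomputable def zIter [TopologicalSpace X] (T : X ≃ₜ X) (n : ℤ) : X → X :=
  if 0 ≤ n then (⇑T)^[n.toNat] else (⇑T.symm)^[(-n).toNat]

/-- `A` is an `ε`-network: every point of the space is within `ε` of `A`. -/
def IsNet [PseudoMetricSpace X] (ε : ℝ) (A : Set X) : Prop :=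
  ∀ x : X, ∃ a ∈ A, dist x a ≤ ε

/-- A point is nonwandering (w.r.t. forward iterates). -/
def NonWandering [TopologicalSpace X] (T : X → X) (x : X) : Prop :=
  ∀ U : Set X, IsOpen U → x ∈ U → ∃ k : ℕ, 1 ≤ k ∧ ((fun p => T^[k] p) '' U ∩ U).Nonempty

/-- One-sided `d`-pseudotrajectory. -/
def IsPseudoTraj [PseudoMetricSpace X] (T : X → X) (d : ℝ) (x : ℕ → X) : Prop :=
  ∀ k : ℕ, dist (x (k + 1)) (T (x k)) ≤ d

/-- Two-sided `d`-pseudotrajectory. -/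
def IsPseudoTrajZ [PseudoMetricSpace X] (T : X → X) (d : ℝ) (x : ℤ → X) : Prop :=
  ∀ k : ℤ, dist (x (k + 1)) (T (x k)) ≤ d

/-- A chain recurrent point. -/
def ChainRec [PseudoMetricSpace X] (T : X → X) (x : X) : Prop :=
  ∀ d > (0 : ℝ), ∃ n : ℕ, 1 ≤ n ∧ ∃ c : ℕ → X, c 0 = x ∧ c n = x ∧
    ∀ k < n, dist (c (k + 1)) (T (c k)) ≤ d

/-- ω-limit set of a point under a map. -/
def omegaSet [TopologicalSpace X] (T : X → X) (y : X) : Set X :=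
  {p | ∃ φ : ℕ → ℕ, StrictMono φ ∧ Tendsto (fun n => T^[φ n] y) atTop (nhds p)}

/-- The set of recurrent points (`x ∈ ω(x)`). -/
def RecurrentPts [TopologicalSpace X] (T : X → X) : Set X := {x | x ∈ omegaSet T x}

/-- The multishadowing property (for homeomorphisms, two-sided). -/
def Multishadowing [PseudoMetricSpace X] (T : X ≃ₜ X) : Prop :=
  ∀ ε > (0 : ℝ), ∃ d > (0 : ℝ), ∀ x : ℤ → X, IsPseudoTrajZ (⇑T) d x →
    ∃ Y : Finset X, ∀ k : ℤ, ∃ y ∈ Y, dist (x k) (zIter T k y) < ε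

/-- Topological support of a measure: points all of whose open neighborhoods
have positive measure. -/
def msupp [TopologicalSpace X] [MeasurableSpace X] (μ : MeasureTheory.Measure X) : Set X :=
  {x | ∀ U : Set X, IsOpen U → x ∈ U → 0 < μ U}

/-- Counting function for density computations. -/
noncomputable def cnt (K : Set ℕ) (N : ℕ) : ℝ :=
  ((Finset.range (N + 1)).filter (· ∈ K)).card


/-- positive upper density, phrased as non-convergence to zero. -/
def PD (K : Set ℕ) : Prop := ¬ Tendsto (fun N : ℕ => cnt K N / (N : ℝ)) atTop (nhds 0)

lemma cnt_nonneg (K : Set ℕ) (N : ℕ) : 0 ≤ cnt K N := by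
  unfold cnt; positivity

lemma cnt_div_nonneg (K : Set ℕ) (N : ℕ) : 0 ≤ cnt K N / (N : ℝ) :=
  div_nonneg (cnt_nonneg K N) (Nat.cast_nonneg N)

lemma cnt_mono {K K' : Set ℕ} (h : K ⊆ K') (N : ℕ) : cnt K N ≤ cnt K' N := by
  have : (Finset.range (N + 1)).filter (· ∈ K) ⊆ (Finset.range (N + 1)).filter (· ∈ K') :=
    Finset.monotone_filter_right _ (fun k _ hk => h hk)
  exact_mod_cast Nat.cast_le.mpr (Finset.card_le_card this)

lemma tendsto_succ_div : Tendsto (fun N : ℕ => ((N : ℝ) + 1) / N) atTop (nhds 1) := by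
  have h1 : Tendsto (fun N : ℕ => 1 + 1 / (N : ℝ)) atTop (nhds 1) := by
    have := tendsto_one_div_atTop_nhds_zero_nat (𝕜 := ℝ)
    simpa using tendsto_const_nhds.add this
  refine h1.congr' ?_
  filter_upwards [eventually_ge_atTop 1] with N hN
  have hN' : (N : ℝ) ≠ 0 := by
    have : (1:ℕ) ≤ N := hN
    exact_mod_cast Nat.one_le_iff_ne_zero.mp this
  field_simp


lemma cnt_div_le_div {a b : ℝ} (h : a ≤ b) (ha : 0 ≤ a) (N : ℕ) : a / (N:ℝ) ≤ b / N := by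
  rcases Nat.eq_zero_or_pos N with h0 | h0
  · subst h0; simp
  · have : (0:ℝ) < N := by exact_mod_cast h0
    exact div_le_div_of_nonneg_right h this.le

lemma PD_univ : PD (Set.univ : Set ℕ) := by
  intro h
  have he : ∀ N : ℕ, cnt Set.univ N = (N : ℝ) + 1 := by
    intro N; unfold cnt; simp
  have h1 : Tendsto (fun N : ℕ => cnt Set.univ N / (N : ℝ)) atTop (nhds 1) := by
    have := tendsto_succ_div
    exact this.congr (fun N => by rw [he N])
  exact one_ne_zero (tendsto_nhds_unique h1 h)

lemma PD_subset {K K' : Set ℕ} (h : K ⊆ K') (hK : PD K) : PD K' := by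
  intro h'
  exact hK (squeeze_zero (fun N => cnt_div_nonneg K N)
    (fun N => cnt_div_le_div (cnt_mono h N) (cnt_nonneg K N) N) h')

lemma PD_finite_union {ι : Type*} {K : Set ℕ} (s : Finset ι) (f : ι → Set ℕ)
    (hcov : K ⊆ ⋃ i ∈ s, f i) (hK : PD K) : ∃ i ∈ s, PD (f i) := by
  by_contra hno
  push_neg at hno
  have hall : ∀ i ∈ s, Tendsto (fun N : ℕ => cnt (f i) N / (N : ℝ)) atTop (nhds 0) := by
    intro i hi
    by_contra hcon
    exact hno i hi hcon
  have hsum : Tendsto (fun N : ℕ => ∑ i ∈ s, cnt (f i) N / (N : ℝ)) atTop (nhds 0) := by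
    have := tendsto_finset_sum s (fun i hi => hall i hi)
    simpa using this
  refine hK (squeeze_zero (fun N => cnt_div_nonneg K N) (fun N => ?_) hsum)
  rw [← Finset.sum_div]
  refine cnt_div_le_div ?_ (cnt_nonneg K N) N
  have hsub : (Finset.range (N + 1)).filter (· ∈ K) ⊆
      s.biUnion (fun i => (Finset.range (N + 1)).filter (· ∈ f i)) := by
    intro k hk
    rw [Finset.mem_filter] at hk
    obtain ⟨hk1, hk2⟩ := hk
    obtain ⟨i, hi, hki⟩ := by simpa using hcov hk2
    exact Finset.mem_biUnion.mpr ⟨i, hi, Finset.mem_filter.mpr ⟨hk1, hki⟩⟩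
  unfold cnt
  calc ((((Finset.range (N + 1)).filter (· ∈ K)).card : ℝ)) ≤ ((s.biUnion (fun i => (Finset.range (N + 1)).filter (· ∈ f i))).card : ℝ) := by
        exact_mod_cast Finset.card_le_card hsub
    _ ≤ ∑ i ∈ s, (((Finset.range (N + 1)).filter (· ∈ f i)).card : ℝ) := by
        exact_mod_cast Finset.card_biUnion_le

lemma PD_shift {K : Set ℕ} (h : PD {k | k + 1 ∈ K}) : PD K := by
  intro h'
  apply h
  have hle : ∀ N : ℕ, cnt {k | k + 1 ∈ K} N ≤ cnt K (N + 1) := by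
    intro N
    have himg : ((Finset.range (N + 1)).filter (fun k => k + 1 ∈ K)).image (· + 1) ⊆
        (Finset.range (N + 2)).filter (· ∈ K) := by
      intro m hm
      obtain ⟨k, hk, rfl⟩ := Finset.mem_image.mp hm
      rw [Finset.mem_filter] at hk ⊢
      exact ⟨Finset.mem_range.mpr (by have := Finset.mem_range.mp hk.1; omega), hk.2⟩
    have := Finset.card_le_card himg
    rw [Finset.card_image_of_injective _ (add_left_injective 1)] at this
    unfold cnt
    exact_mod_cast this
  have h2 : Tendsto (fun N : ℕ => cnt K (N + 1) / ((N : ℝ) + 1) * (((N:ℝ) + 1) / N))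
      atTop (nhds 0) := by
    have ha : Tendsto (fun N : ℕ => cnt K (N + 1) / ((N : ℝ) + 1)) atTop (nhds 0) := by
      have := h'.comp (tendsto_add_atTop_nat 1)
      refine this.congr (fun N => ?_)
      simp [Function.comp]
    simpa using ha.mul tendsto_succ_div
  refine squeeze_zero' (Eventually.of_forall (fun N => cnt_div_nonneg _ N)) ?_ h2
  filter_upwards [eventually_ge_atTop 1] with N hN
  have hN0 : (N:ℝ) ≠ 0 := by exact_mod_cast Nat.one_le_iff_ne_zero.mp hN
  have hN1 : (N:ℝ) + 1 ≠ 0 := by positivity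
  rw [div_mul_div_comm, mul_comm ((N:ℝ)+1), ← div_mul_div_comm, div_self hN1, mul_one]
  exact cnt_div_le_div (hle N) (cnt_nonneg _ N) N

lemma PD_infinite {K : Set ℕ} (h : PD K) : K.Infinite := by
  by_contra hfin
  rw [Set.not_infinite] at hfin
  apply h
  have hb : ∀ N : ℕ, cnt K N ≤ (hfin.toFinset.card : ℝ) := by
    intro N
    have : (Finset.range (N + 1)).filter (· ∈ K) ⊆ hfin.toFinset := by
      intro k hk; rw [Set.Finite.mem_toFinset]; exact (Finset.mem_filter.mp hk).2
    unfold cnt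
    exact_mod_cast Finset.card_le_card this
  have h2 : Tendsto (fun N : ℕ => (hfin.toFinset.card : ℝ) / N) atTop (nhds 0) :=
    tendsto_const_div_atTop_nhds_zero_nat _
  exact squeeze_zero (fun N => cnt_div_nonneg K N)
    (fun N => cnt_div_le_div (hb N) (cnt_nonneg K N) N) h2

lemma PD_pos_limsup {K : Set ℕ} (h : PD K) :
    0 < Filter.limsup (fun N : ℕ => cnt K N / (N : ℝ)) atTop := by
  by_contra hle
  push_neg at hle
  apply h
  have hub : ∀ N : ℕ, cnt K N / (N:ℝ) ≤ 2 := by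
    intro N
    rcases Nat.eq_zero_or_pos N with h0 | h0
    · subst h0; simp [cnt]
    · have h1 : cnt K N ≤ (N:ℝ) + 1 := by
        have : (Finset.range (N+1)).filter (· ∈ K) ⊆ Finset.range (N+1) :=
          Finset.filter_subset _ _
        have := Finset.card_le_card this
        simp only [Finset.card_range] at this
        unfold cnt

        exact_mod_cast this
      have h2 : ((N:ℝ) + 1) ≤ 2 * N := by
        have : (1:ℝ) ≤ (N:ℝ) := by exact_mod_cast h0
        linarith
      rw [div_le_iff₀ (by exact_mod_cast h0)]
      linarith
  have hbdd : IsBoundedUnder (· ≤ ·) atTop (fun N : ℕ => cnt K N / (N:ℝ)) :=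
    isBoundedUnder_of ⟨2, hub⟩
  have hbdd' : IsBoundedUnder (· ≥ ·) atTop (fun N : ℕ => cnt K N / (N:ℝ)) :=
    isBoundedUnder_of ⟨0, fun N => cnt_div_nonneg K N⟩
  have hlinf : (0:ℝ) ≤ liminf (fun N : ℕ => cnt K N / (N:ℝ)) atTop :=
    le_liminf_of_le (hbdd.isCoboundedUnder_flip)
      (Eventually.of_forall (fun N => cnt_div_nonneg K N))
  exact tendsto_of_le_liminf_of_limsup_le hlinf hle hbdd hbdd'

section Dyn
variable [TopologicalSpace X]

lemma iterate_image_closure_orbit (T : X → X) (hT : Continuous T) (q : X) (k : ℕ) :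
    ∀ z ∈ closure (fwdOrbit T q), T^[k] z ∈ closure (fwdOrbit T q) := by
  induction k with
  | zero => intro z hz; simpa using hz
  | succ k ih =>
      intro z hz
      rw [Function.iterate_succ_apply']
      have h1 : T^[k] z ∈ closure (fwdOrbit T q) := ih z hz
      have h2 : T '' closure (fwdOrbit T q) ⊆ closure (fwdOrbit T q) := by
        refine (image_closure_subset_closure_image hT).trans (closure_mono ?_)
        rintro _ ⟨_, ⟨j, rfl⟩, rfl⟩
        exact ⟨j + 1, by simp [Function.iterate_succ_apply']⟩
      exact h2 ⟨_, h1, rfl⟩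

lemma closure_orbit_subset (T : X → X) (hT : Continuous T) {q z : X}
    (hz : z ∈ closure (fwdOrbit T q)) :
    closure (fwdOrbit T z) ⊆ closure (fwdOrbit T q) := by
  refine closure_minimal ?_ isClosed_closure
  rintro _ ⟨k, rfl⟩
  exact iterate_image_closure_orbit T hT q k z hz

/-- every nonempty compact closed invariant set contains a minimal one (Zorn). -/
lemma exists_minimal_invariant (S : X → X) (hS : Continuous S) (A : Set X)
    (hne : A.Nonempty) (hc : IsCompact A) (hcl : IsClosed A) (hinv : S '' A ⊆ A) :
    ∃ M ⊆ A, M.Nonempty ∧ IsCompact M ∧ IsClosed M ∧ S '' M ⊆ M ∧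
      (∀ B ⊆ M, B.Nonempty → IsClosed B → S '' B ⊆ B → B = M) := by
  set Coll : Set (Set X) := {B | B ⊆ A ∧ B.Nonempty ∧ IsClosed B ∧ S '' B ⊆ B}
  have hzorn := zorn_superset_nonempty Coll ?_ A ⟨Subset.rfl, hne, hcl, hinv⟩
  · obtain ⟨M, hMA, hMmin⟩ := hzorn
    obtain ⟨hM1, hM2, hM3, hM4⟩ := hMmin.prop
    refine ⟨M, hM1, hM2, hc.of_isClosed_subset hM3 hM1, hM3, hM4, ?_⟩
    intro B hBM hBne hBcl hBinv
    exact (hMmin.eq_of_subset ⟨hBM.trans hM1, hBne, hBcl, hBinv⟩ hBM).symm.symm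
  · intro c hcC hchain hcne
    refine ⟨⋂₀ c, ⟨?_, ?_, ?_, ?_⟩, fun s hs => sInter_subset_of_mem hs⟩
    · obtain ⟨s, hs⟩ := hcne
      exact (sInter_subset_of_mem hs).trans (hcC hs).1
    · -- nonempty intersection of a chain of compacts
      have : Nonempty c := hcne.to_subtype
      have hdir : Directed (· ⊇ ·) (fun B : c => (B : Set X)) := by
        intro B B'
        rcases hchain.total B.2 B'.2 with h | h
        · exact ⟨B, Subset.rfl, h⟩
        · exact ⟨B', h, Subset.rfl⟩
      have := IsCompact.nonempty_iInter_of_directed_nonempty_isCompact_isClosed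
        (fun B : c => (B : Set X)) hdir (fun B => (hcC B.2).2.1)
        (fun B => hc.of_isClosed_subset (hcC B.2).2.2.1 (hcC B.2).1)
        (fun B => (hcC B.2).2.2.1)
      rwa [sInter_eq_iInter]
    · exact isClosed_sInter (fun B hB => (hcC hB).2.2.1)
    · rintro _ ⟨z, hz, rfl⟩
      exact mem_sInter.mpr fun B hB => (hcC hB).2.2.2 ⟨z, mem_sInter.mp hz B hB, rfl⟩

/-- return times to an open set are syndetic on a minimal set. -/
lemma syndetic_return (S : X → X) (hS : Continuous S) (M : Set X)
    (hMne : M.Nonempty) (hMc : IsCompact M) (hMcl : IsClosed M) (hMinv : S '' M ⊆ M)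
    (hMmin : ∀ B ⊆ M, B.Nonempty → IsClosed B → S '' B ⊆ B → B = M)
    {z : X} (hz : z ∈ M) {U : Set X} (hU : IsOpen U) (hUM : (U ∩ M).Nonempty) :
    ∃ g : ℕ, ∀ m : ℕ, ∃ i ≤ g, S^[m + i] z ∈ U := by
  have hiter : ∀ (k : ℕ) (w : X), w ∈ M → S^[k] w ∈ M := by
    intro k
    induction k with
    | zero => intro w hw; simpa using hw
    | succ k ih =>
        intro w hw
        rw [Function.iterate_succ_apply']
        exact hMinv ⟨_, ih w hw, rfl⟩
  -- every point of M visits U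
  have hvisit : ∀ w ∈ M, ∃ n : ℕ, S^[n] w ∈ U := by
    by_contra hcon
    push_neg at hcon
    obtain ⟨w, hwM, hw⟩ := hcon
    set B : Set X := {v ∈ M | ∀ n : ℕ, S^[n] v ∉ U}
    have hBM : B ⊆ M := fun v hv => hv.1
    have hBne : B.Nonempty := ⟨w, hwM, fun n => hw n⟩
    have hBcl : IsClosed B := by
      have : B = M ∩ ⋂ n : ℕ, (S^[n]) ⁻¹' Uᶜ := by
        ext v
        simp only [mem_setOf_eq, mem_inter_iff, mem_iInter, mem_preimage, mem_compl_iff, B]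
      rw [this]
      exact hMcl.inter (isClosed_iInter fun n => (hU.isClosed_compl).preimage (hS.iterate n))
    have hBinv : S '' B ⊆ B := by
      rintro _ ⟨v, hv, rfl⟩
      refine ⟨hMinv ⟨v, hv.1, rfl⟩, fun n => ?_⟩
      rw [← Function.iterate_succ_apply]
      exact hv.2 (n + 1)
    have hBeq : B = M := hMmin B hBM hBne hBcl hBinv
    obtain ⟨u, huU, huM⟩ := hUM
    have : u ∈ B := hBeq ▸ huM
    exact this.2 0 (by simpa using huU)
  -- compactness: finitely many return times suffice
  have hcover : M ⊆ ⋃ n : ℕ, (S^[n]) ⁻¹' U := by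
    intro w hw
    obtain ⟨n, hn⟩ := hvisit w hw
    exact mem_iUnion.mpr ⟨n, hn⟩
  obtain ⟨t, ht⟩ := hMc.elim_finite_subcover (fun n : ℕ => (S^[n]) ⁻¹' U)
    (fun n => hU.preimage (hS.iterate n)) hcover
  rcases t.eq_empty_or_nonempty with rfl | htne
  · obtain ⟨w, hw⟩ := hMne
    simpa using ht hw
  refine ⟨t.max' htne, fun m => ?_⟩
  have hmem : S^[m] z ∈ M := hiter m z hz
  obtain ⟨n, hn, hnU⟩ := by simpa using ht hmem
  refine ⟨n, t.le_max' n hn, ?_⟩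
  rw [add_comm, Function.iterate_add_apply]
  exact hnU

end Dyn

section MetricDyn
variable [MetricSpace X]

/-- Gottschalk: syndetic return times to all neighborhoods implies minimality. -/
lemma minimalPt_of_syndetic [CompactSpace X] (T : X → X) (hT : Continuous T) (q : X)
    (h : ∀ U : Set X, IsOpen U → q ∈ U → ∃ g : ℕ, ∀ m : ℕ, ∃ i ≤ g, T^[m + i] q ∈ U) :
    IsMinimalPt T q := by
  intro z hz
  refine le_antisymm (closure_orbit_subset T hT hz) ?_
  have hq : q ∈ closure (fwdOrbit T z) := by
    rw [Metric.mem_closure_iff]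
    intro r hr
    obtain ⟨g, hg⟩ := h (Metric.ball q (r / 2)) Metric.isOpen_ball
      (Metric.mem_ball_self (by linarith))
    set D : Set X := ⋃ i ∈ Finset.range (g + 1), (T^[i]) ⁻¹' (Metric.closedBall q (r / 2))
    have hDcl : IsClosed D := by
      refine Set.Finite.isClosed_biUnion (Finset.finite_toSet _) ?_
      intro i _
      exact Metric.isClosed_closedBall.preimage (hT.iterate i)
    have horb : fwdOrbit T q ⊆ D := by
      rintro _ ⟨m, rfl⟩
      obtain ⟨i, hig, hiU⟩ := hg m
      have hmem : i ∈ Finset.range (g + 1) := Finset.mem_range.mpr (by omega)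
      refine Set.mem_biUnion hmem ?_
      rw [mem_preimage, ← Function.iterate_add_apply, add_comm]
      exact Metric.ball_subset_closedBall hiU
    have hzD : z ∈ D := (closure_minimal horb hDcl) hz
    rw [Set.mem_iUnion₂] at hzD
    obtain ⟨i, _, hiD⟩ := hzD
    refine ⟨T^[i] z, ⟨i, rfl⟩, ?_⟩
    have hd : dist (T^[i] z) q ≤ r / 2 := by
      simpa [Metric.mem_closedBall] using hiD
    rw [dist_comm]
    linarith
  refine closure_minimal ?_ isClosed_closure
  rintro _ ⟨k, rfl⟩
  exact iterate_image_closure_orbit T hT z k q hq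

lemma syndetic_of_minimalPt [CompactSpace X] (T : X → X) (hT : Continuous T) (q : X)
    (hq : IsMinimalPt T q) {U : Set X} (hU : IsOpen U) (hqU : q ∈ U) :
    ∃ g : ℕ, ∀ m : ℕ, ∃ i ≤ g, T^[m + i] q ∈ U := by
  set M := closure (fwdOrbit T q)
  have hqM : q ∈ M := subset_closure ⟨0, rfl⟩
  have hMcl : IsClosed M := isClosed_closure
  have hMinv : T '' M ⊆ M := by
    rintro _ ⟨z, hz, rfl⟩
    have := iterate_image_closure_orbit T hT q 1 z hz
    simpa using this
  have hMmin : ∀ B ⊆ M, B.Nonempty → IsClosed B → T '' B ⊆ B → B = M := by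
    intro B hBM hBne hBcl hBinv
    obtain ⟨z, hzB⟩ := hBne
    have horbB' : ∀ k : ℕ, T^[k] z ∈ B := by
      intro k
      induction k with
      | zero => simpa using hzB
      | succ k ih =>
          rw [Function.iterate_succ_apply']
          exact hBinv ⟨_, ih, rfl⟩
    have horbB : fwdOrbit T z ⊆ B := by
      rintro _ ⟨k, rfl⟩
      exact horbB' k
    have : M ⊆ B := by
      show closure (fwdOrbit T q) ⊆ B
      rw [← hq z (hBM hzB)]
      exact closure_minimal horbB hBcl
    exact le_antisymm hBM this
  exact syndetic_return T hT M ⟨q, hqM⟩ hMcl.isCompact hMcl hMinv hMmin hqM hU ⟨q, hqU, hqM⟩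

lemma isMinimalPt_iterate [CompactSpace X] (T : X → X) (hT : Continuous T) (q : X)
    (hq : IsMinimalPt T q) (i : ℕ) : IsMinimalPt T (T^[i] q) := by
  have hmem : T^[i] q ∈ closure (fwdOrbit T q) := subset_closure ⟨i, rfl⟩
  have heq : closure (fwdOrbit T (T^[i] q)) = closure (fwdOrbit T q) := hq _ hmem
  intro z hz
  rw [heq] at hz ⊢
  exact hq z hz

end MetricDyn

/-- The one-sided shift map on sequences. -/
def shft (u : ℕ → X) : ℕ → X := fun n => u (n + 1)

lemma shft_continuous [TopologicalSpace X] : Continuous (shft : (ℕ → X) → (ℕ → X)) :=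
  continuous_pi fun n => continuous_apply (n + 1)

lemma shft_iterate (u : ℕ → X) (k : ℕ) : shft^[k] u = fun n => u (n + k) := by
  induction k with
  | zero => simp
  | succ k ih =>
      rw [Function.iterate_succ_apply', ih]
      funext n
      show u (n + 1 + k) = u (n + (k + 1))
      ring_nf

lemma shft_iterate_apply (u : ℕ → X) (k n : ℕ) : shft^[k] u n = u (n + k) := by
  rw [shft_iterate]


/-- key uniformity lemma: choice of `d` for a given `δ`. -/
lemma exists_good_d [MetricSpace X] [CompactSpace X] (T : X → X) (hT : Continuous T)
    (δ : ℝ) (hδ : 0 < δ) :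
    ∃ d > (0:ℝ), ∀ V : Set (ℕ → X), V.Nonempty → IsClosed V →
      (∀ u ∈ V, shft u ∈ V) → (∀ u ∈ V, IsPseudoTraj T d u) →
      ∃ u ∈ V, ∃ q : X, IsMinimalPt T q ∧ dist (u 0) q < δ := by
  by_contra hcon
  push_neg at hcon
  have hbad : ∀ n : ℕ, ∃ V : Set (ℕ → X), V.Nonempty ∧ IsClosed V ∧
      (∀ u ∈ V, shft u ∈ V) ∧ (∀ u ∈ V, IsPseudoTraj T (1 / (n + 1)) u) ∧
      ∀ u ∈ V, ∀ q : X, IsMinimalPt T q → δ ≤ dist (u 0) q := by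
    intro n
    obtain ⟨V, hV1, hV2, hV3, hV4, hV5⟩ := hcon (1 / (n + 1)) (by positivity)
    exact ⟨V, hV1, hV2, hV3, hV4, hV5⟩
  choose V hne hcl hinv hps hbad using hbad
  -- nested closures of tails
  set C : ℕ → Set (ℕ → X) := fun N => closure (⋃ n : ℕ, V (N + n)) with hC
  have hCne : ∀ N, (C N).Nonempty := by
    intro N
    obtain ⟨u, hu⟩ := hne N
    exact ⟨u, subset_closure (mem_iUnion.mpr ⟨0, by simpa using hu⟩)⟩
  have hCcl : ∀ N, IsClosed (C N) := fun N => isClosed_closure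
  have hCanti : ∀ N M : ℕ, N ≤ M → C M ⊆ C N := by
    intro N M hNM
    apply closure_mono
    intro u hu
    obtain ⟨n, hn⟩ := mem_iUnion.mp hu
    exact mem_iUnion.mpr ⟨M - N + n, by rwa [show N + (M - N + n) = M + n by omega]⟩
  have hCdir : Directed (· ⊇ ·) C :=
    fun a b => ⟨max a b, hCanti a _ (le_max_left a b), hCanti b _ (le_max_right a b)⟩
  have hCcomp : ∀ N, IsCompact (C N) := fun N => (hCcl N).isCompact
  set Vs : Set (ℕ → X) := ⋂ N, C N with hVs
  have hVsne : Vs.Nonempty :=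
    IsCompact.nonempty_iInter_of_directed_nonempty_isCompact_isClosed C hCdir hCne hCcomp hCcl
  have hVsinv : ∀ u ∈ Vs, shft u ∈ Vs := by
    intro u hu
    refine mem_iInter.mpr fun N => ?_
    have h1 : shft '' C N ⊆ C N := by
      refine (image_closure_subset_closure_image shft_continuous).trans (closure_mono ?_)
      rw [image_iUnion]
      refine iUnion_subset fun n => ?_
      rintro _ ⟨v, hv, rfl⟩
      exact mem_iUnion.mpr ⟨n, hinv (N + n) v hv⟩
    exact h1 ⟨u, mem_iInter.mp hu N, rfl⟩
  have hVsexact : ∀ u ∈ Vs, ∀ k : ℕ, u (k + 1) = T (u k) := by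
    intro u hu k
    have hdle : ∀ N : ℕ, dist (u (k + 1)) (T (u k)) ≤ 1 / (N + 1) := by
      intro N
      have hclosed : IsClosed {v : ℕ → X | dist (v (k + 1)) (T (v k)) ≤ 1 / (N + 1)} := by
        have hcont : Continuous fun v : ℕ → X => dist (v (k + 1)) (T (v k)) :=
          (continuous_apply (k + 1)).dist (hT.comp (continuous_apply k))
        exact isClosed_le hcont continuous_const
      have hsub : C N ⊆ {v : ℕ → X | dist (v (k + 1)) (T (v k)) ≤ 1 / (N + 1)} := by
        refine closure_minimal ?_ hclosed
        refine iUnion_subset fun n => ?_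
        intro v hv
        refine le_trans (hps (N + n) v hv k) ?_
        apply one_div_le_one_div_of_le (by positivity)
        push_cast
        linarith [Nat.cast_nonneg (α := ℝ) n]
      exact hsub (mem_iInter.mp hu N)
    have : dist (u (k + 1)) (T (u k)) ≤ 0 := by
      by_contra hpos
      push_neg at hpos
      obtain ⟨N, hN⟩ := exists_nat_one_div_lt hpos
      exact absurd (hdle N) (by push_cast; linarith)
    exact dist_le_zero.mp this
  have hVsbad : ∀ u ∈ Vs, ∀ q : X, IsMinimalPt T q → δ ≤ dist (u 0) q := by
    intro u hu q hq
    have hclosed : IsClosed {v : ℕ → X | δ ≤ dist (v 0) q} :=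
      isClosed_le continuous_const ((continuous_apply 0).dist continuous_const)
    have hsub : C 0 ⊆ {v : ℕ → X | δ ≤ dist (v 0) q} := by
      refine closure_minimal (iUnion_subset fun n v hv => ?_) hclosed
      exact hbad (0 + n) v hv q hq
    exact hsub (mem_iInter.mp hu 0)
  -- minimal subsystem of Vs
  obtain ⟨M, hMVs, hMne', hMc, hMcl, hMinv, hMmin⟩ := exists_minimal_invariant shft
    shft_continuous Vs hVsne (isClosed_iInter hCcl).isCompact (isClosed_iInter hCcl)
    (by rintro _ ⟨u, hu, rfl⟩; exact hVsinv u hu)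
  obtain ⟨w, hw⟩ := hMne'
  have hwVs : w ∈ Vs := hMVs hw
  have hworbit : ∀ n : ℕ, w n = T^[n] (w 0) := by
    intro n
    induction n with
    | zero => simp
    | succ n ih => rw [Function.iterate_succ_apply', ← ih, hVsexact w hwVs n]
  -- w 0 is a minimal point of T
  have hmin : IsMinimalPt T (w 0) := by
    refine minimalPt_of_syndetic T hT (w 0) fun U hU hqU => ?_
    have hUopen : IsOpen ((fun v : ℕ → X => v 0) ⁻¹' U) := hU.preimage (continuous_apply 0)
    obtain ⟨g, hg⟩ := syndetic_return shft shft_continuous M ⟨w, hw⟩ hMc hMcl hMinv hMmin hw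
      hUopen ⟨w, mem_preimage.mpr hqU, hw⟩
    refine ⟨g, fun m => ?_⟩
    obtain ⟨i, hig, hiU⟩ := hg m
    refine ⟨i, hig, ?_⟩
    rw [mem_preimage, shft_iterate_apply, zero_add, hworbit] at hiU
    exact hiU
  exact absurd (hVsbad w hwVs (w 0) hmin) (by simp [hδ])

theorem stmt2 [MetricSpace X] [CompactSpace X] (T : X → X) (hT : Continuous T) :
    ∀ ε > (0 : ℝ), ∃ d > (0 : ℝ), ∀ x : ℕ → X, IsPseudoTraj T d x →
      ∃ y : X, IsMinimalPt T y ∧ ∃ K : Set ℕ, K.Infinite ∧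
        0 < Filter.limsup (fun N : ℕ => cnt K N / (N : ℝ)) atTop ∧
        ∀ k ∈ K, dist (x k) (T^[k] y) < ε := by
  intro ε hε
  set δ : ℝ := ε / 3 with hδdef
  have hδ : 0 < δ := by positivity
  obtain ⟨d, hd, hgood⟩ := exists_good_d T hT δ hδ
  refine ⟨d, hd, fun x hx => ?_⟩
  -- the set of points with positive-upper-density visit times
  set KU : Set (ℕ → X) → Set ℕ := fun U => {k | shft^[k] x ∈ U} with hKU
  set V : Set (ℕ → X) := {u | ∀ U : Set (ℕ → X), IsOpen U → u ∈ U → PD (KU U)} with hV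
  have hVcl : IsClosed V := by
    rw [← isOpen_compl_iff]
    rw [isOpen_iff_forall_mem_open]
    intro u hu
    simp only [mem_compl_iff, hV, mem_setOf_eq, not_forall] at hu
    obtain ⟨U, hUopen, huU, hnPD⟩ := hu
    refine ⟨U, fun v hv hvV => ?_, hUopen, huU⟩
    exact hnPD (hvV U hUopen hv)
  have hVne : V.Nonempty := by
    by_contra hemp
    rw [not_nonempty_iff_eq_empty] at hemp
    -- choose for each u a bad neighborhood
    have hbad : ∀ u : ℕ → X, ∃ U : Set (ℕ → X), IsOpen U ∧ u ∈ U ∧ ¬ PD (KU U) := by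
      intro u
      have : u ∉ V := by rw [hemp]; exact notMem_empty u
      simp only [hV, mem_setOf_eq, not_forall] at this
      obtain ⟨U, h1, h2, h3⟩ := this
      exact ⟨U, h1, h2, h3⟩
    choose Uf hUopen hUmem hUbad using hbad
    have : Nonempty X := ⟨x 0⟩
    obtain ⟨t, ht⟩ := isCompact_univ.elim_finite_subcover Uf hUopen
      (fun u _ => mem_iUnion.mpr ⟨u, hUmem u⟩)
    have hcov : (Set.univ : Set ℕ) ⊆ ⋃ u ∈ t, KU (Uf u) := by
      intro k _
      obtain ⟨u, hu, hku⟩ := mem_iUnion₂.mp (ht (mem_univ (shft^[k] x)))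
      exact mem_iUnion₂.mpr ⟨u, hu, hku⟩
    obtain ⟨u, hut, hPDu⟩ := PD_finite_union t (fun u => KU (Uf u)) hcov PD_univ
    exact hUbad u hPDu
  have hVinv : ∀ u ∈ V, shft u ∈ V := by
    intro u hu U hUopen hmem
    have h1 : PD (KU (shft ⁻¹' U)) := hu _ (hUopen.preimage shft_continuous) hmem
    apply PD_shift
    refine PD_subset ?_ h1
    intro k hk
    simp only [hKU, mem_setOf_eq, mem_preimage] at hk ⊢
    rwa [← Function.iterate_succ_apply' shft k x] at hk
  have hVps : ∀ u ∈ V, IsPseudoTraj T d u := by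
    intro u hu
    -- u is in the closure of the shifted trajectories
    have hucl : u ∈ closure (Set.range fun k => shft^[k] x) := by
      by_contra hnot
      have hPD := hu _ (isOpen_compl_iff.mpr isClosed_closure) hnot
      apply hPD
      have : KU (closure (Set.range fun k => shft^[k] x))ᶜ = ∅ := by
        rw [eq_empty_iff_forall_notMem]
        intro k hk
        exact hk (subset_closure ⟨k, rfl⟩)
      rw [this]
      have : ∀ N, cnt (∅ : Set ℕ) N = 0 := by
        intro N
        unfold cnt
        simp
      refine tendsto_const_nhds.congr fun N => ?_
      rw [this N]
      simp
    intro k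
    have hclosed : IsClosed {v : ℕ → X | dist (v (k + 1)) (T (v k)) ≤ d} :=
      isClosed_le ((continuous_apply (k + 1)).dist (hT.comp (continuous_apply k)))
        continuous_const
    have hsub : closure (Set.range fun j => shft^[j] x) ⊆
        {v : ℕ → X | dist (v (k + 1)) (T (v k)) ≤ d} := by
      refine closure_minimal ?_ hclosed
      rintro _ ⟨j, rfl⟩
      simp only [mem_setOf_eq, shft_iterate_apply]
      have := hx (k + j)
      rw [show k + 1 + j = k + j + 1 by omega]
      exact this
    exact hsub hucl
  obtain ⟨u, huV, q, hqmin, hqdist⟩ := hgood V hVne hVcl hVinv hVps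
  set p : X := u 0 with hp
  -- positive density visits to the δ-ball around p
  have hK0 : PD {k | dist (x k) p < δ} := by
    have hopen : IsOpen {v : ℕ → X | dist (v 0) p < δ} :=
      isOpen_lt ((continuous_apply 0).dist continuous_const) continuous_const
    have h1 := huV _ hopen (by simp [hp, hδ])
    refine PD_subset ?_ h1
    intro k hk
    simp only [hKU, mem_setOf_eq, shft_iterate_apply, zero_add] at hk
    exact hk
  obtain ⟨g, hg⟩ := syndetic_of_minimalPt T hT q hqmin isOpen_ball (mem_ball_self hδ)
  -- split K0 according to the return offset
  set f : ℕ → Set ℕ := fun i => {k | dist (x k) p < δ ∧ T^[k + i] q ∈ ball q δ} with hf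
  have hcov : {k | dist (x k) p < δ} ⊆ ⋃ i ∈ Finset.range (g + 1), f i := by
    intro k hk
    obtain ⟨i, hig, hiU⟩ := hg k
    exact mem_iUnion₂.mpr ⟨i, Finset.mem_range.mpr (by omega), hk, hiU⟩
  obtain ⟨i, hit, hPDi⟩ := PD_finite_union _ f hcov hK0
  refine ⟨T^[i] q, isMinimalPt_iterate T hT q hqmin i, f i, PD_infinite hPDi,
    PD_pos_limsup hPDi, ?_⟩
  intro k hk
  obtain ⟨hk1, hk2⟩ := hk
  have heq : T^[k] (T^[i] q) = T^[k + i] q := (Function.iterate_add_apply T k i q).symm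
  rw [heq]
  have h3 : dist (T^[k + i] q) q < δ := mem_ball.mp hk2
  calc dist (x k) (T^[k + i] q) ≤ dist (x k) p + dist p q + dist q (T^[k + i] q) :=
        dist_triangle4 _ _ _ _
    _ < δ + δ + δ := by
        rw [dist_comm q]
        exact add_lt_add (add_lt_add hk1 hqdist) h3
    _ = ε := by rw [hδdef]; ring
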